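/- Let a ≥ 2 be an integer and let Φ = (1 + √5)/2. The set A of natural numbers k for which the interval [a^k, a^(k+1)) contains exactly ⌊(log a)/(log Φ)⌋ Fibonacci numbers has natural density equal to 1 − ⟨(log a)/(log Φ)⟩, i.e., the limit as N → ∞ of card(A ∩ [0, N))/N exists and equals 1 − ⟨(log a)/(log Φ)⟩, where ⟨x⟩ denotes the fractional part of x. -/

import Mathlib

open Filter

/-- The golden ratio Φ = (1 + √5)/2. -/
noncomputable def Phi : ℝ := (1 + Real.sqrt 5) / 2


lemma Phi_eq_gold : Phi = Real.goldenRatio := rfl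

lemma sqrt5_gt_two : (2:ℝ) < Real.sqrt 5 := by
  rw [show (2:ℝ) = Real.sqrt 4 by rw [show (4:ℝ) = 2^2 by norm_num, Real.sqrt_sq]; norm_num]
  exact Real.sqrt_lt_sqrt (by norm_num) (by norm_num)

lemma one_lt_Phi : 1 < Phi := by rw [Phi_eq_gold]; exact Real.one_lt_goldenRatio

lemma sfib_bounds (n : ℕ) :
    Phi ^ n - 1 ≤ Real.sqrt 5 * Nat.fib n ∧ Real.sqrt 5 * Nat.fib n ≤ Phi ^ n + 1 := by
  have h5 : (0:ℝ) < Real.sqrt 5 := lt_trans two_pos sqrt5_gt_two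
  have hψ : |Real.goldenConj| ≤ 1 := by
    rw [abs_le]; constructor
    · exact le_of_lt Real.neg_one_lt_goldenConj
    · exact le_of_lt (lt_trans Real.goldenConj_neg one_pos)
  have hψn : |Real.goldenConj ^ n| ≤ 1 := by
    rw [abs_pow]; exact pow_le_one₀ (abs_nonneg _) hψ
  have h := Real.coe_fib_eq n
  have heq : Real.sqrt 5 * (Nat.fib n : ℝ) = Real.goldenRatio ^ n - Real.goldenConj ^ n := by
    rw [h, mul_div_cancel₀ _ (ne_of_gt h5)]
  rw [Phi_eq_gold]
  rw [abs_le] at hψn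
  constructor <;> [skip; skip] <;> rw [heq] <;> linarith [hψn.1, hψn.2]

lemma not_cast_eq_Phi_pow (a m : ℕ) : (a:ℝ) ≠ Phi ^ (m+1) := by
  intro h
  have hexp := Real.goldenRatio_mul_fib_succ_add_fib m
  rw [Phi_eq_gold] at h
  have hfib : (0:ℝ) < Nat.fib (m+1) := by
    exact_mod_cast Nat.fib_pos.mpr (Nat.succ_pos m)
  have : Real.goldenRatio = ((a:ℝ) - Nat.fib m) / Nat.fib (m+1) := by
    rw [eq_div_iff (ne_of_gt hfib)]
    linarith
  exact Real.goldenRatio_irrational ⟨((a:ℚ) - Nat.fib m) / Nat.fib (m+1), by push_cast [this]; ring⟩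

lemma log_Phi_pos : 0 < Real.log Phi := Real.log_pos one_lt_Phi

lemma fract_L_pos (a : ℕ) (ha : 2 ≤ a) :
    0 < Int.fract (Real.log a / Real.log Phi) := by
  set L := Real.log a / Real.log Phi with hL
  have ha1 : (1:ℝ) < a := by exact_mod_cast ha
  have hPhi2 : Phi < 2 := by rw [Phi_eq_gold]; exact Real.goldenRatio_lt_two
  have hL1 : 1 < L := by
    rw [hL, lt_div_iff₀ log_Phi_pos, one_mul]
    exact Real.log_lt_log (lt_trans one_pos one_lt_Phi) (lt_of_lt_of_le hPhi2 (by exact_mod_cast ha))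
  rw [Int.fract_pos]
  intro hfl
  have hfl1 : (1:ℝ) ≤ (⌊L⌋:ℝ) := by rw [← hfl]; linarith
  have hm1 : 1 ≤ ⌊L⌋ := by exact_mod_cast hfl1
  -- L = ⌊L⌋, so log a = ⌊L⌋ * log Phi, so a = Phi ^ ⌊L⌋
  set m : ℕ := ⌊L⌋.toNat with hm
  have hmc : ((m:ℕ):ℝ) = (⌊L⌋:ℝ) := by
    rw [hm]; exact_mod_cast Int.toNat_of_nonneg (by omega)
  have hloga : Real.log a = m * Real.log Phi := by
    rw [hmc, ← hfl, hL, div_mul_cancel₀ _ (ne_of_gt log_Phi_pos)]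
  have : (a:ℝ) = Phi ^ m := by
    have h1 : Real.log a = Real.log (Phi ^ m) := by
      rw [Real.log_pow]; exact_mod_cast hloga
    have := Real.exp_log (show (0:ℝ) < a by linarith)
    rw [← this, h1, Real.exp_log (pow_pos (lt_trans one_pos one_lt_Phi) m)]
  obtain ⟨m', hm'⟩ : ∃ m', m = m' + 1 := by
    refine ⟨m - 1, ?_⟩
    omega
  rw [hm'] at this
  exact not_cast_eq_Phi_pow a m' this

lemma fib_exists (c : ℕ) : ∃ n, c ≤ Nat.fib n :=
  ⟨c + 5, le_trans (by omega) (Nat.le_fib_self (by omega))⟩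

noncomputable def Nf (a k : ℕ) : ℕ := Nat.find (fib_exists (a ^ k))

lemma Nf_spec (a k : ℕ) : a ^ k ≤ Nat.fib (Nf a k) := Nat.find_spec (fib_exists (a ^ k))

lemma Nf_min {a k n : ℕ} (h : n < Nf a k) : Nat.fib n < a ^ k := by
  have := Nat.find_min (fib_exists (a ^ k)) h
  omega

lemma Nf_mono {a : ℕ} (ha : 1 ≤ a) : Monotone (Nf a) := by
  intro k l hkl
  exact Nat.find_mono (fun n h => le_trans (Nat.pow_le_pow_right ha hkl) h)

lemma Nf_ge3 {a k : ℕ} (ha : 2 ≤ a) (hk : 1 ≤ k) : 3 ≤ Nf a k := by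
  by_contra h
  push_neg at h
  have h2 : a ^ k ≤ Nat.fib (Nf a k) := Nf_spec a k
  have h3 : Nat.fib (Nf a k) ≤ Nat.fib 2 := Nat.fib_mono (by omega)
  have h4 : 2 ≤ a ^ k := le_trans ha (by calc a = a ^ 1 := (pow_one a).symm
                                            _ ≤ a ^ k := Nat.pow_le_pow_right (by omega) hk)
  have hf2 : Nat.fib 2 = 1 := rfl
  omega

lemma count_eq {a : ℕ} (ha : 2 ≤ a) {k : ℕ} (hk : 1 ≤ k) :
    (Set.range Nat.fib ∩ Set.Ico (a ^ k) (a ^ (k + 1))).ncard = Nf a (k + 1) - Nf a k := by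
  have h3 : 3 ≤ Nf a k := Nf_ge3 ha hk
  have hsm : ∀ m n : ℕ, 2 ≤ m → m < n → Nat.fib m < Nat.fib n := fun m n hm hmn =>
    lt_of_lt_of_le (Nat.fib_lt_fib_succ hm) (Nat.fib_mono hmn)
  have hset : Set.range Nat.fib ∩ Set.Ico (a ^ k) (a ^ (k + 1))
      = Nat.fib '' Set.Ico (Nf a k) (Nf a (k + 1)) := by
    ext x
    constructor
    · rintro ⟨⟨n, rfl⟩, h1, h2⟩
      refine ⟨n, ⟨?_, ?_⟩, rfl⟩
      · by_contra hn
        push_neg at hn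
        exact absurd (Nf_min hn) (by omega)
      · by_contra hn
        push_neg at hn
        have := Nat.fib_mono hn
        have := Nf_spec a (k + 1)
        omega
    · rintro ⟨n, ⟨h1, h2⟩, rfl⟩
      exact ⟨⟨n, rfl⟩, le_trans (Nf_spec a k) (Nat.fib_mono h1), Nf_min h2⟩
  rw [hset, Set.ncard_image_of_injOn, ← Finset.coe_Ico, Set.ncard_coe_finset, Nat.card_Ico]
  intro x hx y hy hxy
  obtain ⟨hx1, -⟩ := hx
  obtain ⟨hy1, -⟩ := hy
  by_contra hne
  rcases Nat.lt_or_ge x y with h | h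
  · exact absurd hxy (Nat.ne_of_lt (hsm x y (by omega) h))
  · have : y < x := by omega
    exact absurd hxy.symm (Nat.ne_of_lt (hsm y x (by omega) this))

lemma Phi_pos : 0 < Phi := lt_trans one_pos one_lt_Phi

lemma sqrt5_pos : (0:ℝ) < Real.sqrt 5 := lt_trans two_pos sqrt5_gt_two

lemma Nf_lb {a : ℕ} (ha : 2 ≤ a) (k : ℕ) :
    Real.log (Real.sqrt 5 * (a:ℝ) ^ k - 1) ≤ (Nf a k : ℝ) * Real.log Phi := by
  set n := Nf a k
  have h1 : (a:ℝ) ^ k ≤ (Nat.fib n : ℝ) := by exact_mod_cast Nf_spec a k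
  have h2 := (sfib_bounds n).2
  have h3 : Real.sqrt 5 * (a:ℝ) ^ k ≤ Real.sqrt 5 * (Nat.fib n : ℝ) :=
    mul_le_mul_of_nonneg_left h1 (le_of_lt sqrt5_pos)
  have h4 : Real.sqrt 5 * (a:ℝ) ^ k - 1 ≤ Phi ^ n := by linarith
  have hak1 : (1:ℝ) ≤ (a:ℝ) ^ k := one_le_pow₀ (by exact_mod_cast (by omega : 1 ≤ a))
  calc Real.log (Real.sqrt 5 * (a:ℝ) ^ k - 1) ≤ Real.log (Phi ^ n) :=
        Real.log_le_log (by nlinarith [sqrt5_gt_two]) h4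
    _ = (n : ℝ) * Real.log Phi := by rw [Real.log_pow]

lemma Nf_ub {a : ℕ} (ha : 2 ≤ a) {k : ℕ} (hk : 1 ≤ k) :
    (Nf a k : ℝ) * Real.log Phi
      < Real.log (Real.sqrt 5) + k * Real.log a + Real.log Phi := by
  set n := Nf a k with hn
  have hn3 : 3 ≤ n := Nf_ge3 ha hk
  have hfib : Nat.fib (n - 1) < a ^ k := Nf_min (by omega)
  have h1 : (Nat.fib (n - 1) : ℝ) ≤ (a:ℝ) ^ k - 1 := by
    have : (Nat.fib (n-1) : ℝ) + 1 ≤ ((a ^ k : ℕ) : ℝ) := by exact_mod_cast hfib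
    push_cast at this
    linarith
  have h2 := (sfib_bounds (n - 1)).1
  have h3 : Real.sqrt 5 * (Nat.fib (n-1) : ℝ) ≤ Real.sqrt 5 * ((a:ℝ) ^ k - 1) :=
    mul_le_mul_of_nonneg_left h1 (le_of_lt sqrt5_pos)
  have h4 : Phi ^ (n - 1) < Real.sqrt 5 * (a:ℝ) ^ k := by nlinarith [sqrt5_gt_two]
  have hak : (0:ℝ) < (a:ℝ) ^ k := pow_pos (by exact_mod_cast (by omega : 0 < a)) k
  have h5 : Real.log (Phi ^ (n-1)) < Real.log (Real.sqrt 5 * (a:ℝ) ^ k) :=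
    Real.log_lt_log (pow_pos Phi_pos _) h4
  rw [Real.log_pow, Real.log_mul (ne_of_gt sqrt5_pos) (ne_of_gt hak), Real.log_pow] at h5
  have hcast : ((n - 1 : ℕ) : ℝ) = (n : ℝ) - 1 := by
    rw [Nat.cast_sub (by omega), Nat.cast_one]
  rw [hcast] at h5
  have := log_Phi_pos
  linarith

noncomputable def Ee (a k : ℕ) : ℝ :=
  (Real.log (Real.sqrt 5 * (a:ℝ) ^ k) - Real.log (Real.sqrt 5 * (a:ℝ) ^ k - 1))
    / Real.log Phi

lemma sak_big {a : ℕ} (ha : 2 ≤ a) (k : ℕ) : (2:ℝ) ≤ Real.sqrt 5 * (a:ℝ) ^ k := by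
  have hak1 : (1:ℝ) ≤ (a:ℝ) ^ k := one_le_pow₀ (by exact_mod_cast (by omega : 1 ≤ a))
  nlinarith [sqrt5_gt_two]

lemma Ee_nonneg {a : ℕ} (ha : 2 ≤ a) (k : ℕ) : 0 ≤ Ee a k := by
  have h := sak_big ha k
  apply div_nonneg _ (le_of_lt log_Phi_pos)
  have := Real.log_le_log (by linarith) (show Real.sqrt 5 * (a:ℝ)^k - 1 ≤ Real.sqrt 5 * (a:ℝ)^k by linarith)
  linarith

lemma Ee_tendsto {a : ℕ} (ha : 2 ≤ a) : Tendsto (Ee a) atTop (nhds 0) := by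
  have ha1 : (1:ℝ) < a := by exact_mod_cast ha
  have hinner : Tendsto (fun k : ℕ => Real.sqrt 5 * (a:ℝ) ^ k) atTop atTop :=
    Tendsto.const_mul_atTop sqrt5_pos (tendsto_pow_atTop_atTop_of_one_lt ha1)
  have houter : Tendsto (fun x : ℝ => Real.log x - Real.log (x - 1)) atTop (nhds 0) := by
    have hsub : Tendsto (fun x : ℝ => x - 1) atTop atTop :=
      tendsto_atTop_add_const_right atTop (-1) tendsto_id
    have ht : Tendsto (fun x : ℝ => (x - 1)⁻¹) atTop (nhds 0) :=
      hsub.inv_tendsto_atTop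
    have h1 : Tendsto (fun x : ℝ => 1 + (x - 1)⁻¹) atTop (nhds (1 + 0)) :=
      tendsto_const_nhds.add ht
    rw [add_zero] at h1
    have h2 : Tendsto (fun x : ℝ => Real.log (1 + (x - 1)⁻¹)) atTop (nhds 0) := by
      have h3 := (Real.continuousAt_log one_ne_zero).tendsto.comp h1
      rwa [Real.log_one] at h3
    apply h2.congr'
    filter_upwards [eventually_gt_atTop (1:ℝ)] with x hx
    have hx0 : x ≠ 0 := by linarith
    have hx1 : x - 1 ≠ 0 := by intro h; rw [sub_eq_zero] at h; exact absurd h (by linarith)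
    rw [show 1 + (x - 1)⁻¹ = x / (x - 1) by field_simp; ring, Real.log_div hx0 hx1]
  have := ((houter.comp hinner).div_const (Real.log Phi))
  rw [zero_div] at this
  exact this

lemma Nf_div_tendsto {a : ℕ} (ha : 2 ≤ a) :
    Tendsto (fun N : ℕ => (Nf a N : ℝ) / N) atTop
      (nhds (Real.log a / Real.log Phi)) := by
  have ha1 : (1:ℝ) < a := by exact_mod_cast ha
  set L := Real.log a / Real.log Phi with hL
  set C := (Real.log (Real.sqrt 5) + Real.log Phi) / Real.log Phi with hC
  have hup : Tendsto (fun N : ℕ => L + C / N) atTop (nhds L) := by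
    have := tendsto_const_nhds (x := L) (f := (atTop : Filter ℕ)) |>.add
      (tendsto_const_div_atTop_nhds_zero_nat C)
    rwa [add_zero] at this
  apply tendsto_of_tendsto_of_tendsto_of_le_of_le' tendsto_const_nhds hup
  · -- L ≤ Nf a N / N eventually
    filter_upwards [eventually_ge_atTop 1] with N hN
    have hNpos : (0:ℝ) < N := by exact_mod_cast hN
    have hak1 : (1:ℝ) ≤ (a:ℝ) ^ N := one_le_pow₀ (by linarith)
    have h1 : (N:ℝ) * Real.log a ≤ Real.log (Real.sqrt 5 * (a:ℝ) ^ N - 1) := by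
      have harg : (a:ℝ) ^ N ≤ Real.sqrt 5 * (a:ℝ) ^ N - 1 := by
        nlinarith [sqrt5_gt_two]
      have := Real.log_le_log (by positivity) harg
      rwa [Real.log_pow] at this
    have h2 := le_trans h1 (Nf_lb ha N)
    rw [hL, div_le_div_iff₀ log_Phi_pos hNpos]
    linarith
  · -- Nf a N / N ≤ L + C / N eventually
    filter_upwards [eventually_ge_atTop 1] with N hN
    have hNpos : (0:ℝ) < N := by exact_mod_cast hN
    have h1 := Nf_ub ha hN
    rw [div_le_iff₀ hNpos]
    have hNne : (N:ℝ) ≠ 0 := ne_of_gt hNpos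
    have hexp : (L + C / N) * N = L * N + C := by field_simp
    rw [hexp]
    have hLl : L * Real.log Phi = Real.log a := by
      rw [hL, div_mul_cancel₀ _ (ne_of_gt log_Phi_pos)]
    have hCl : C * Real.log Phi = Real.log (Real.sqrt 5) + Real.log Phi := by
      rw [hC, div_mul_cancel₀ _ (ne_of_gt log_Phi_pos)]
    have hLN : L * Real.log Phi * N = Real.log a * N := by rw [hLl]
    have hfinal : (Nf a N : ℝ) * Real.log Phi ≤ (L * N + C) * Real.log Phi := by
      nlinarith [h1, hLN, hCl]
    exact le_of_mul_le_mul_right hfinal log_Phi_pos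

/-- For an integer `a ≥ 2`, the set of natural numbers `k` for which the interval
`[a^k, a^(k+1))` contains exactly `⌊log a / log Φ⌋` Fibonacci numbers has natural density
`1 - ⟨log a / log Φ⟩`, where `⟨x⟩` is the fractional part of `x`. -/
theorem density_floor_fib_count (a : ℕ) (ha : 2 ≤ a)
    (A : Set ℕ)
    (hA : A = {k : ℕ | ((Set.range Nat.fib ∩ Set.Ico (a ^ k) (a ^ (k + 1))).ncard : ℤ)
        = ⌊Real.log a / Real.log Phi⌋}) :
    Tendsto (fun N : ℕ => (((A ∩ Set.Ico 0 N).ncard : ℝ) / N)) atTop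
      (nhds (1 - Int.fract (Real.log a / Real.log Phi))) := by
  classical
  set L : ℝ := Real.log a / Real.log Phi with hLdef
  have hLl : L * Real.log Phi = Real.log a := div_mul_cancel₀ _ (ne_of_gt log_Phi_pos)
  have hfr : (⌊L⌋ : ℝ) = L - Int.fract L := (Int.self_sub_fract L).symm
  have hfpos : 0 < Int.fract L := fract_L_pos a ha
  have hflt : Int.fract L < 1 := Int.fract_lt_one L
  have hmin : 0 < min (Int.fract L) (1 - Int.fract L) := lt_min hfpos (by linarith)
  -- eventually the errors are small
  have hev1 := (Ee_tendsto ha).eventually (gt_mem_nhds hmin)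
  have hev2 := ((Ee_tendsto ha).comp (tendsto_add_atTop_nat 1)).eventually (gt_mem_nhds hmin)
  obtain ⟨K0, hK0⟩ := eventually_atTop.mp (hev1.and hev2)
  set K := max K0 1 with hKdef
  set dZ : ℕ → ℤ := fun k => (Nf a (k + 1) : ℤ) - (Nf a k : ℤ) with hdZ
  -- the log of √5 * a^m
  have hlog : ∀ m : ℕ, Real.log (Real.sqrt 5 * (a:ℝ) ^ m)
      = Real.log (Real.sqrt 5) + m * Real.log a := by
    intro m
    have hapos : (0:ℝ) < (a:ℝ) ^ m := pow_pos (by exact_mod_cast (by omega : 0 < a)) m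
    rw [Real.log_mul (ne_of_gt sqrt5_pos) (ne_of_gt hapos), Real.log_pow]
  have hEdef : ∀ m : ℕ, Real.log (Real.sqrt 5 * (a:ℝ) ^ m - 1)
      = Real.log (Real.sqrt 5) + m * Real.log a - Ee a m * Real.log Phi := by
    intro m
    have : Ee a m * Real.log Phi
        = Real.log (Real.sqrt 5 * (a:ℝ) ^ m) - Real.log (Real.sqrt 5 * (a:ℝ) ^ m - 1) :=
      div_mul_cancel₀ _ (ne_of_gt log_Phi_pos)
    rw [← hlog m]
    linarith
  -- key dichotomy for k ≥ K
  have hd : ∀ k, K ≤ k → dZ k = ⌊L⌋ ∨ dZ k = ⌊L⌋ + 1 := by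
    intro k hk
    have hk0 : K0 ≤ k := le_trans (le_max_left _ _) hk
    have hk1 : 1 ≤ k := le_trans (le_max_right _ _) hk
    obtain ⟨hEk, hEk1⟩ := hK0 k hk0
    have hEklt : Ee a k < 1 - Int.fract L := lt_of_lt_of_le hEk (min_le_right _ _)
    have hEk1lt : Ee a (k + 1) < Int.fract L := lt_of_lt_of_le hEk1 (min_le_left _ _)
    have hub_k := Nf_ub ha hk1
    have hub_k1 := Nf_ub ha (show 1 ≤ k + 1 by omega)
    have hlb_k := Nf_lb ha k
    have hlb_k1 := Nf_lb ha (k + 1)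
    rw [hEdef] at hlb_k hlb_k1
    have hpc : ((k + 1 : ℕ) : ℝ) = (k : ℝ) + 1 := by push_cast; ring
    rw [hpc] at hlb_k1 hub_k1
    have hA1 : ((⌊L⌋ : ℝ) - 1) * Real.log Phi
        < (((Nf a (k+1) : ℝ)) - ((Nf a k : ℝ))) * Real.log Phi := by
      nlinarith [mul_pos (sub_pos.mpr hEk1lt) log_Phi_pos, log_Phi_pos]
    have hA2 : (((Nf a (k+1) : ℝ)) - ((Nf a k : ℝ))) * Real.log Phi
        < ((⌊L⌋ : ℝ) + 2) * Real.log Phi := by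
      nlinarith [mul_pos (sub_pos.mpr hEklt) log_Phi_pos, log_Phi_pos]
    have h1 : (⌊L⌋ : ℝ) - 1 < ((Nf a (k+1) : ℝ)) - ((Nf a k : ℝ)) :=
      (mul_lt_mul_iff_left₀ log_Phi_pos).mp hA1
    have h2 : ((Nf a (k+1) : ℝ)) - ((Nf a k : ℝ)) < (⌊L⌋ : ℝ) + 2 :=
      (mul_lt_mul_iff_left₀ log_Phi_pos).mp hA2
    have hz1 : (⌊L⌋ : ℤ) - 1 < (Nf a (k+1) : ℤ) - (Nf a k : ℤ) := by
      have : ((⌊L⌋ - 1 : ℤ) : ℝ) < (((Nf a (k+1) : ℤ) - (Nf a k : ℤ) : ℤ) : ℝ) := by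
        push_cast
        linarith
      exact_mod_cast this
    have hz2 : (Nf a (k+1) : ℤ) - (Nf a k : ℤ) < ⌊L⌋ + 2 := by
      have : (((Nf a (k+1) : ℤ) - (Nf a k : ℤ) : ℤ) : ℝ) < ((⌊L⌋ + 2 : ℤ) : ℝ) := by
        push_cast
        linarith
      exact_mod_cast this
    simp only [hdZ]
    omega
  -- membership characterization
  have hmemA : ∀ k, K ≤ k → (k ∈ A ↔ dZ k = ⌊L⌋) := by
    intro k hk
    have hk1 : 1 ≤ k := le_trans (le_max_right _ _) hk
    rw [hA]
    simp only [Set.mem_setOf_eq]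
    rw [count_eq ha hk1]
    have hmono : Nf a k ≤ Nf a (k + 1) := Nf_mono (by omega) (Nat.le_succ k)
    constructor
    · intro h; rw [hdZ]; rw [← h]; push_cast [hmono]; ring
    · intro h; rw [← h, hdZ]; push_cast [hmono]; ring
  -- the cardinality as a finset card
  have hncard : ∀ M : ℕ, (A ∩ Set.Ico 0 M).ncard = ((Finset.range M).filter (· ∈ A)).card := by
    intro M
    have : A ∩ Set.Ico 0 M = ↑((Finset.range M).filter (· ∈ A)) := by
      ext x
      simp only [Set.mem_inter_iff, Set.mem_Ico, Finset.coe_filter, Finset.mem_range,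
        Set.mem_setOf_eq]
      constructor
      · rintro ⟨h1, -, h2⟩; exact ⟨h2, h1⟩
      · rintro ⟨h1, h2⟩; exact ⟨h2, Nat.zero_le x, h1⟩
    rw [this, Set.ncard_coe_finset]
  -- telescoping sum identity
  have htel : ∀ N, K ≤ N → ∑ k ∈ Finset.Ico K N, dZ k = (Nf a N : ℤ) - (Nf a K : ℤ) := by
    intro N hN
    rw [Finset.sum_Ico_eq_sub _ hN, Finset.sum_range_sub (fun m => (Nf a m : ℤ)),
      Finset.sum_range_sub (fun m => (Nf a m : ℤ))]
    ring
  -- the sum in terms of the filtered card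
  have hsum : ∀ N, K ≤ N → ∑ k ∈ Finset.Ico K N, dZ k
      = (⌊L⌋ + 1) * ((N : ℤ) - K) - ((Finset.Ico K N).filter (· ∈ A)).card := by
    intro N hN
    have : ∀ k ∈ Finset.Ico K N, dZ k = (⌊L⌋ + 1) - (if k ∈ A then (1:ℤ) else 0) := by
      intro k hk
      obtain ⟨hk1, -⟩ := Finset.mem_Ico.mp hk
      by_cases hkA : k ∈ A
      · rw [if_pos hkA, ((hmemA k hk1).mp hkA)]; ring
      · rw [if_neg hkA]
        rcases hd k hk1 with h | h
        · exact absurd ((hmemA k hk1).mpr h) hkA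
        · rw [h]; ring
    rw [Finset.sum_congr rfl this, Finset.sum_sub_distrib, Finset.sum_const,
      Finset.sum_boole, Nat.card_Ico, nsmul_eq_mul, Nat.cast_sub hN]
    push_cast
    ring
  -- the main finite identity
  have hkey : ∀ N, K ≤ N → (((Finset.range N).filter (· ∈ A)).card : ℤ)
      = (((Finset.range K).filter (· ∈ A)).card : ℤ)
        + (⌊L⌋ + 1) * ((N:ℤ) - K) - ((Nf a N : ℤ) - Nf a K) := by
    intro N hN
    have hsplit : (Finset.range N).filter (· ∈ A)
        = ((Finset.range K).filter (· ∈ A)) ∪ ((Finset.Ico K N).filter (· ∈ A)) := by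
      rw [Finset.range_eq_Ico, ← Finset.filter_union, Finset.range_eq_Ico,
        Finset.Ico_union_Ico_eq_Ico (Nat.zero_le K) hN]
    have hdisj : Disjoint ((Finset.range K).filter (· ∈ A)) ((Finset.Ico K N).filter (· ∈ A)) := by
      rw [Finset.range_eq_Ico]
      exact Finset.disjoint_filter_filter (Finset.Ico_disjoint_Ico_consecutive 0 K N)
    rw [hsplit, Finset.card_union_of_disjoint hdisj]
    have h1 := htel N hN
    have h2 := hsum N hN
    rw [h1] at h2
    push_cast
    omega
  -- final limit computation
  set C0 : ℝ := (((Finset.range K).filter (· ∈ A)).card : ℝ) - ((⌊L⌋:ℝ) + 1) * K + (Nf a K : ℝ)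
    with hC0
  have hg : Tendsto (fun N : ℕ => C0 / N + ((⌊L⌋:ℝ) + 1) - (Nf a N : ℝ) / N) atTop
      (nhds (0 + ((⌊L⌋:ℝ) + 1) - L)) :=
    ((tendsto_const_div_atTop_nhds_zero_nat C0).add tendsto_const_nhds).sub (Nf_div_tendsto ha)
  have hval : (0:ℝ) + ((⌊L⌋:ℝ) + 1) - L = 1 - Int.fract L := by rw [hfr]; ring
  rw [hval] at hg
  apply hg.congr'
  filter_upwards [eventually_ge_atTop (max K 1)] with N hN
  have hNK : K ≤ N := le_trans (le_max_left _ _) hN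
  have hN1 : 1 ≤ N := le_trans (le_max_right _ _) hN
  have hNne : (N:ℝ) ≠ 0 := by
    have : (0:ℝ) < N := by exact_mod_cast hN1
    exact ne_of_gt this
  have hid : ((A ∩ Set.Ico 0 N).ncard : ℝ) = C0 + ((⌊L⌋:ℝ) + 1) * N - (Nf a N : ℝ) := by
    have h := hkey N hNK
    have h2 : ((A ∩ Set.Ico 0 N).ncard : ℤ) = (((Finset.range N).filter (· ∈ A)).card : ℤ) := by
      exact_mod_cast congrArg Nat.cast (hncard N)
    rw [hC0]
    have := h2.trans h
    have hcast : ((A ∩ Set.Ico 0 N).ncard : ℝ)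
        = ((((Finset.range K).filter (· ∈ A)).card : ℤ)
          + (⌊L⌋ + 1) * ((N:ℤ) - K) - ((Nf a N : ℤ) - Nf a K) : ℤ) := by exact_mod_cast this
    rw [hcast]
    push_cast
    ring
  rw [hid]
  field_simp
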